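/- arXiv:1202.1212 — 3 statements merged into one kernel-verified Lean document; each statement's English description precedes it below -/
import Mathlib

section
/- Mean width of the sparse signal set (upper bound): there is an absolute constant C > 0 such that for all integers 1 ≤ s ≤ n, the set S_{n,s} = {x ∈ R^n : ||x||_0 ≤ s, ||x||_2 ≤ 1} satisfies w(S_{n,s})² ≤ C s log(2n/s). -/
set_option maxHeartbeats 1000000
open MeasureTheory ProbabilityTheory Real
open scoped RealInnerProductSpace NNReal ENNReal Pointwise

noncomputable def stdGaussian (n : ℕ) : Measure (EuclideanSpace ℝ (Fin n)) :=
  Measure.map (⇑(EuclideanSpace.equiv (Fin n) ℝ).symm)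
    (Measure.pi fun _ : Fin n => gaussianReal 0 1)

noncomputable def meanWidth {n : ℕ} (K : Set (EuclideanSpace ℝ (Fin n))) : ℝ :=
  ∫ g, sSup ((fun z => ⟪g, z⟫) '' (K - K)) ∂(stdGaussian n)

section Aux
lemma integrable_exp_sq_quarter_gauss :
    Integrable (fun x : ℝ => Real.exp (x ^ 2 / 4)) (gaussianReal 0 1) := by
  rw [gaussianReal_of_var_ne_zero _ one_ne_zero,
    integrable_withDensity_iff (measurable_gaussianPDF 0 1)
      (ae_of_all _ fun x => ENNReal.ofReal_lt_top)]
  have h : ∀ x : ℝ, Real.exp (x ^ 2 / 4) * (gaussianPDF 0 1 x).toReal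
      = (Real.sqrt (2 * π))⁻¹ * Real.exp (-(1/4) * x ^ 2) := by
    intro x
    rw [gaussianPDF, ENNReal.toReal_ofReal (gaussianPDFReal_nonneg _ _ _), gaussianPDFReal]
    push_cast
    rw [mul_left_comm, ← Real.exp_add]
    ring_nf
  simp only [h]
  exact (integrable_exp_neg_mul_sq (by norm_num : (0:ℝ) < 1/4)).const_mul _

lemma integral_exp_sq_quarter_gauss :
    ∫ x, Real.exp (x ^ 2 / 4) ∂(gaussianReal 0 1) = Real.sqrt 2 := by
  rw [gaussianReal_of_var_ne_zero _ one_ne_zero]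
  have hd : (gaussianPDF 0 1) = fun x => ((Real.toNNReal (gaussianPDFReal 0 1 x) : ℝ≥0) : ℝ≥0∞) :=
    rfl
  rw [hd, integral_withDensity_eq_integral_smul
    ((measurable_gaussianPDFReal 0 1).real_toNNReal) _]
  have h : ∀ x : ℝ, (Real.toNNReal (gaussianPDFReal 0 1 x)) • Real.exp (x ^ 2 / 4)
      = (Real.sqrt (2 * π))⁻¹ * Real.exp (-(1/4) * x ^ 2) := by
    intro x
    rw [NNReal.smul_def, Real.coe_toNNReal _ (gaussianPDFReal_nonneg _ _ _), gaussianPDFReal]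
    push_cast
    rw [smul_eq_mul, mul_assoc, ← Real.exp_add]
    ring_nf
  simp only [h]
  rw [integral_const_mul, integral_gaussian]
  have h2 : Real.sqrt 2 ≠ 0 := ne_of_gt (Real.sqrt_pos.2 (by norm_num))
  have hp : Real.sqrt π ≠ 0 := ne_of_gt (Real.sqrt_pos.2 pi_pos)
  have hss : Real.sqrt 2 * Real.sqrt 2 = 2 := Real.mul_self_sqrt (by norm_num)
  rw [show π / (1/4) = 4 * π by ring, Real.sqrt_mul (by norm_num : (0:ℝ) ≤ 4),
    show Real.sqrt 4 = 2 by
      rw [show (4:ℝ) = 2^2 by norm_num, Real.sqrt_sq (by norm_num : (0:ℝ) ≤ 2)],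
    Real.sqrt_mul (by norm_num : (0:ℝ) ≤ 2) π]
  field_simp
  rw [Real.sq_sqrt (by norm_num)]

lemma exp_sum_sq_eq_prod {n : ℕ} (T : Finset (Fin n)) (x : Fin n → ℝ) :
    Real.exp ((∑ i ∈ T, x i ^ 2) / 4)
      = ∏ i : Fin n, (if i ∈ T then Real.exp (x i ^ 2 / 4) else 1) := by
  rw [Finset.prod_ite_mem, Finset.univ_inter, Finset.sum_div, Real.exp_sum]

lemma pi_gauss_integrable {n : ℕ} (T : Finset (Fin n)) :
    Integrable (fun x : Fin n → ℝ => Real.exp ((∑ i ∈ T, x i ^ 2) / 4))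
      (Measure.pi fun _ => gaussianReal 0 1) := by
  letI : MeasureSpace ℝ := ⟨gaussianReal 0 1⟩
  haveI : IsProbabilityMeasure (volume : Measure ℝ) := by
    change IsProbabilityMeasure (gaussianReal 0 1); infer_instance
  haveI : SigmaFinite (volume : Measure ℝ) := by
    change SigmaFinite (gaussianReal 0 1); infer_instance
  have hvol : (Measure.pi fun _ : Fin n => gaussianReal 0 1) = (volume : Measure (Fin n → ℝ)) :=
    rfl
  rw [hvol]
  simp only [exp_sum_sq_eq_prod T]
  refine Integrable.fintype_prod (f := fun i y => if i ∈ T then Real.exp (y ^ 2 / 4) else 1) ?_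
  intro i
  by_cases hi : i ∈ T
  · simp only [hi, if_true]
    exact integrable_exp_sq_quarter_gauss
  · simp only [hi, if_false]
    exact integrable_const (1:ℝ)

lemma pi_gauss_integral {n : ℕ} (T : Finset (Fin n)) :
    ∫ x : Fin n → ℝ, Real.exp ((∑ i ∈ T, x i ^ 2) / 4) ∂(Measure.pi fun _ => gaussianReal 0 1)
      = Real.sqrt 2 ^ T.card := by
  letI : MeasureSpace ℝ := ⟨gaussianReal 0 1⟩
  haveI : IsProbabilityMeasure (volume : Measure ℝ) := by
    change IsProbabilityMeasure (gaussianReal 0 1); infer_instance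
  haveI : SigmaFinite (volume : Measure ℝ) := by
    change SigmaFinite (gaussianReal 0 1); infer_instance
  have hvol : (Measure.pi fun _ : Fin n => gaussianReal 0 1) = (volume : Measure (Fin n → ℝ)) :=
    rfl
  rw [hvol]
  simp only [exp_sum_sq_eq_prod T]
  rw [volume_pi, MeasureTheory.integral_fintype_prod_eq_prod
    (f := fun i y => if i ∈ T then Real.exp (y ^ 2 / 4) else 1)]
  have : ∀ i : Fin n, (∫ y : ℝ, (if i ∈ T then Real.exp (y ^ 2 / 4) else 1))
      = (if i ∈ T then Real.sqrt 2 else 1) := by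
    intro i
    by_cases hi : i ∈ T
    · simp only [hi, if_true]
      exact integral_exp_sq_quarter_gauss
    · simp only [hi, if_false, MeasureTheory.integral_const, smul_eq_mul, mul_one]
      change ((gaussianReal 0 1) Set.univ).toReal = 1
      simp
  simp only [this]
  rw [Finset.prod_ite_mem, Finset.univ_inter, Finset.prod_const]
end Aux

theorem meanWidth_sparse_set :
    ∃ C : ℝ, 0 < C ∧ ∀ n s : ℕ, 1 ≤ s → s ≤ n →
      meanWidth {x : EuclideanSpace ℝ (Fin n) |
          (Finset.univ.filter fun j => x j ≠ 0).card ≤ s ∧ ‖x‖ ≤ 1} ^ 2 ≤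
        C * s * Real.log (2 * n / s) := by
  refine ⟨96, by norm_num, fun n s hs1 hsn => ?_⟩
  classical
  set K : Set (EuclideanSpace ℝ (Fin n)) :=
    {x | (Finset.univ.filter fun j => x j ≠ 0).card ≤ s ∧ ‖x‖ ≤ 1} with hK
  -- basic parameters
  set m : ℕ := min (2 * s) n with hm
  have hn1 : 1 ≤ n := hs1.trans hsn
  have hm1 : 1 ≤ m := le_min (by omega) hn1
  have hmn : m ≤ n := min_le_right _ _
  have hsm : s ≤ m := le_min (by omega) hsn
  have hm2s : m ≤ 2 * s := min_le_left _ _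
  set 𝒯 : Finset (Finset (Fin n)) := Finset.powersetCard m Finset.univ with h𝒯def
  have h𝒯 : 𝒯.Nonempty := by
    rw [← Finset.card_pos, h𝒯def, Finset.card_powersetCard, Finset.card_univ, Fintype.card_fin]
    exact Nat.choose_pos hmn
  have hmem𝒯 : ∀ T : Finset (Fin n), T ∈ 𝒯 ↔ T.card = m := by
    intro T
    rw [h𝒯def, Finset.mem_powersetCard_univ]
  -- the functions
  set Q : Finset (Fin n) → EuclideanSpace ℝ (Fin n) → ℝ :=
    fun T g => ∑ i ∈ T, g i ^ 2 with hQdef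
  set S : EuclideanSpace ℝ (Fin n) → ℝ := fun g => 𝒯.sup' h𝒯 fun T => Real.sqrt (Q T g)
    with hSdef
  set M : EuclideanSpace ℝ (Fin n) → ℝ := fun g => 2 * S g with hMdef
  set Y : EuclideanSpace ℝ (Fin n) → ℝ := fun g => ∑ T ∈ 𝒯, Real.exp (Q T g / 4) with hYdef
  have hQ0 : ∀ T g, 0 ≤ Q T g := fun T g => Finset.sum_nonneg fun i _ => sq_nonneg _
  have hQmeas : ∀ T, Measurable (Q T) := fun T =>
    Finset.measurable_sum _ fun i _ => (by fun_prop)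
  have hSmeas : Measurable S := by
    have h := Finset.measurable_sup' h𝒯 (f := fun T (g : EuclideanSpace ℝ (Fin n)) =>
      Real.sqrt (Q T g)) (fun T _ => (hQmeas T).sqrt)
    have hfun : S = 𝒯.sup' h𝒯 (fun T (g : EuclideanSpace ℝ (Fin n)) => Real.sqrt (Q T g)) := by
      funext g
      rw [hSdef, Finset.sup'_apply]
    rw [hfun]
    exact h
  have hMmeas : Measurable M := (hSmeas.const_mul 2)
  have hYmeas : Measurable Y :=
    Finset.measurable_sum _ fun T _ => ((hQmeas T).div_const 4).exp
  have hS0 : ∀ g, 0 ≤ S g := by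
    intro g
    obtain ⟨T, hT⟩ := h𝒯
    exact le_trans (Real.sqrt_nonneg (Q T g))
      (Finset.le_sup' (fun T => Real.sqrt (Q T g)) hT)
  have hM0 : ∀ g, 0 ≤ M g := fun g => mul_nonneg (by norm_num) (hS0 g)
  -- membership of 0
  have hK0 : (0 : EuclideanSpace ℝ (Fin n)) ∈ K := by
    constructor
    · simp
    · simp
  have h0KK : (0 : EuclideanSpace ℝ (Fin n)) ∈ K - K := by
    simpa using Set.sub_mem_sub hK0 hK0
  -- the key pointwise bound
  have hkey : ∀ g : EuclideanSpace ℝ (Fin n), ∀ y ∈ (fun z => ⟪g, z⟫) '' (K - K), y ≤ M g := by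
    intro g y hy
    obtain ⟨z, hz, rfl⟩ := hy
    rw [Set.mem_sub] at hz
    obtain ⟨u, hu, v, hv, rfl⟩ := hz
    set z : EuclideanSpace ℝ (Fin n) := u - v with hzdef
    have hzap : ∀ i, z i = u i - v i := fun i => rfl
    set supp : Finset (Fin n) := Finset.univ.filter fun j => z j ≠ 0 with hsuppdef
    have hsuppcard : supp.card ≤ m := by
      refine le_min ?_ (le_trans (Finset.card_le_univ _) (by simp))
      have hsub : supp ⊆ (Finset.univ.filter fun j => u j ≠ 0) ∪
          (Finset.univ.filter fun j => v j ≠ 0) := by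
        intro j hj
        rw [hsuppdef, Finset.mem_filter] at hj
        rw [Finset.mem_union, Finset.mem_filter, Finset.mem_filter]
        by_contra hcon
        push_neg at hcon
        obtain ⟨h1, h2⟩ := hcon
        have hu0 := h1 (Finset.mem_univ j)
        have hv0 := h2 (Finset.mem_univ j)
        exact hj.2 (by rw [hzap j, hu0, hv0, sub_zero])
      calc supp.card ≤ _ := Finset.card_le_card hsub
        _ ≤ _ := Finset.card_union_le _ _
        _ ≤ s + s := add_le_add hu.1 hv.1
        _ = 2 * s := by ring
    obtain ⟨T, hsubT, -, hTcard⟩ := Finset.exists_subsuperset_card_eq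
      (Finset.subset_univ supp) hsuppcard
      (by rw [Finset.card_univ, Fintype.card_fin]; exact hmn)
    have hT𝒯 : T ∈ 𝒯 := (hmem𝒯 T).2 hTcard
    have hzero : ∀ i, i ∉ T → z i = 0 := by
      intro i hi
      by_contra hne
      exact hi (hsubT (by rw [hsuppdef]; exact Finset.mem_filter.2 ⟨Finset.mem_univ i, hne⟩))
    have hinner : ⟪g, z⟫ = ∑ i ∈ T, g i * z i := by
      rw [PiLp.inner_apply]
      simp only [RCLike.inner_apply, conj_trivial]
      rw [Finset.sum_congr rfl fun i _ => mul_comm _ _]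
      refine (Finset.sum_subset (Finset.subset_univ T) ?_).symm
      intro i _ hiT
      rw [hzero i hiT, mul_zero]
    have hCS : ∑ i ∈ T, g i * z i ≤ Real.sqrt (Q T g) * Real.sqrt (∑ i ∈ T, z i ^ 2) := by
      have h2 := Finset.sum_mul_sq_le_sq_mul_sq T (fun i => g i) (fun i => z i)
      calc ∑ i ∈ T, g i * z i ≤ |∑ i ∈ T, g i * z i| := le_abs_self _
        _ = Real.sqrt ((∑ i ∈ T, g i * z i) ^ 2) := (Real.sqrt_sq_eq_abs _).symm
        _ ≤ Real.sqrt ((∑ i ∈ T, g i ^ 2) * ∑ i ∈ T, z i ^ 2) := Real.sqrt_le_sqrt h2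
        _ = _ := Real.sqrt_mul (hQ0 T g) _
    have hz2 : Real.sqrt (∑ i ∈ T, z i ^ 2) ≤ 2 := by
      have hsum : ∑ i ∈ T, z i ^ 2 ≤ ∑ i : Fin n, z i ^ 2 :=
        Finset.sum_le_sum_of_subset_of_nonneg (Finset.subset_univ T)
          (fun i _ _ => sq_nonneg _)
      have hnorm : ∑ i : Fin n, z i ^ 2 = ‖z‖ ^ 2 := by
        rw [EuclideanSpace.norm_eq, Real.sq_sqrt (Finset.sum_nonneg fun i _ => sq_nonneg _)]
        simp [sq_abs]
      have hzle : ‖z‖ ≤ 2 := by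
        calc ‖z‖ = ‖u - v‖ := rfl
          _ ≤ ‖u‖ + ‖v‖ := norm_sub_le _ _
          _ ≤ 1 + 1 := add_le_add hu.2 hv.2
          _ = 2 := by norm_num
      have h4 : ∑ i ∈ T, z i ^ 2 ≤ 4 := by
        rw [hnorm] at hsum
        nlinarith [norm_nonneg z]
      calc Real.sqrt (∑ i ∈ T, z i ^ 2) ≤ Real.sqrt 4 := Real.sqrt_le_sqrt h4
        _ = 2 := by
          rw [show (4:ℝ) = 2 ^ 2 by norm_num, Real.sqrt_sq (by norm_num : (0:ℝ) ≤ 2)]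
    have hQS : Real.sqrt (Q T g) ≤ S g := Finset.le_sup' (fun T => Real.sqrt (Q T g)) hT𝒯
    calc ⟪g, z⟫ = ∑ i ∈ T, g i * z i := hinner
      _ ≤ Real.sqrt (Q T g) * Real.sqrt (∑ i ∈ T, z i ^ 2) := hCS
      _ ≤ Real.sqrt (Q T g) * 2 :=
          mul_le_mul_of_nonneg_left hz2 (Real.sqrt_nonneg _)
      _ ≤ S g * 2 := mul_le_mul_of_nonneg_right hQS (by norm_num)
      _ = M g := by rw [hMdef]; ring
  have himg_ne : ∀ g : EuclideanSpace ℝ (Fin n),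
      ((fun z => ⟪g, z⟫) '' (K - K)).Nonempty :=
    fun g => ⟨⟪g, 0⟫, Set.mem_image_of_mem _ h0KK⟩
  have hbdd : ∀ g : EuclideanSpace ℝ (Fin n), BddAbove ((fun z => ⟪g, z⟫) '' (K - K)) :=
    fun g => ⟨M g, fun y hy => hkey g y hy⟩
  have hf0 : ∀ g : EuclideanSpace ℝ (Fin n), 0 ≤ sSup ((fun z => ⟪g, z⟫) '' (K - K)) := by
    intro g
    have h0m : (0:ℝ) ∈ (fun z => ⟪g, z⟫) '' (K - K) := by
      refine ⟨0, h0KK, ?_⟩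
      simp
    exact le_csSup (hbdd g) h0m
  have hfM : ∀ g : EuclideanSpace ℝ (Fin n),
      sSup ((fun z => ⟪g, z⟫) '' (K - K)) ≤ M g :=
    fun g => csSup_le (himg_ne g) (hkey g)
  -- transfer to the pi measure
  haveI hprob : IsProbabilityMeasure (_root_.stdGaussian n) := by
    unfold _root_.stdGaussian
    exact Measure.isProbabilityMeasure_map
      ((EuclideanSpace.equiv (Fin n) ℝ).symm.continuous.measurable.aemeasurable)
  set φ : (Fin n → ℝ) → EuclideanSpace ℝ (Fin n) := ⇑(EuclideanSpace.equiv (Fin n) ℝ).symm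
    with hφdef
  have hφm : Measurable φ := (EuclideanSpace.equiv (Fin n) ℝ).symm.continuous.measurable
  have hmap : _root_.stdGaussian n = Measure.map φ (Measure.pi fun _ : Fin n => gaussianReal 0 1) :=
    rfl
  have hint_transfer : ∀ F : EuclideanSpace ℝ (Fin n) → ℝ, Measurable F →
      (Integrable F (_root_.stdGaussian n) ↔
        Integrable (fun x => F (φ x)) (Measure.pi fun _ : Fin n => gaussianReal 0 1)) := by
    intro F hF
    rw [hmap]
    exact integrable_map_measure hF.aestronglyMeasurable hφm.aemeasurable
  have hEq_transfer : ∀ F : EuclideanSpace ℝ (Fin n) → ℝ, Measurable F →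
      ∫ g, F g ∂(_root_.stdGaussian n)
        = ∫ x, F (φ x) ∂(Measure.pi fun _ : Fin n => gaussianReal 0 1) := by
    intro F hF
    rw [hmap]
    exact integral_map hφm.aemeasurable hF.aestronglyMeasurable
  -- integrability and value of ∫ Y
  have hYint : Integrable Y (_root_.stdGaussian n) := by
    rw [hint_transfer Y hYmeas]
    exact integrable_finset_sum _ fun T _ => pi_gauss_integrable T
  have hYval : ∫ g, Y g ∂(_root_.stdGaussian n) = (n.choose m : ℝ) * Real.sqrt 2 ^ m := by
    rw [hEq_transfer Y hYmeas]
    calc ∫ x, Y (φ x) ∂(Measure.pi fun _ : Fin n => gaussianReal 0 1)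
        = ∑ T ∈ 𝒯, ∫ x : Fin n → ℝ, Real.exp ((∑ i ∈ T, x i ^ 2) / 4)
            ∂(Measure.pi fun _ : Fin n => gaussianReal 0 1) :=
          integral_finset_sum _ fun T _ => pi_gauss_integrable T
      _ = ∑ T ∈ 𝒯, Real.sqrt 2 ^ m := by
          refine Finset.sum_congr rfl fun T hT => ?_
          rw [pi_gauss_integral T, (hmem𝒯 T).1 hT]
      _ = (n.choose m : ℝ) * Real.sqrt 2 ^ m := by
          rw [Finset.sum_const, h𝒯def, Finset.card_powersetCard, Finset.card_univ,
            Fintype.card_fin, nsmul_eq_mul]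
  -- pointwise facts about Y
  have hY1 : ∀ g, 1 ≤ Y g := by
    intro g
    obtain ⟨T, hT⟩ := h𝒯
    calc (1:ℝ) = Real.exp 0 := Real.exp_zero.symm
      _ ≤ Real.exp (Q T g / 4) := Real.exp_le_exp.2 (div_nonneg (hQ0 T g) (by norm_num))
      _ ≤ Y g := Finset.single_le_sum (f := fun T => Real.exp (Q T g / 4))
          (fun T _ => (Real.exp_pos _).le) hT
  have hYpos : ∀ g, 0 < Y g := fun g => lt_of_lt_of_le one_pos (hY1 g)
  have hlogY0 : ∀ g, 0 ≤ Real.log (Y g) := fun g => Real.log_nonneg (hY1 g)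
  have hM2log : ∀ g, M g ^ 2 ≤ 16 * Real.log (Y g) := by
    intro g
    obtain ⟨T, hT, hTS⟩ := Finset.exists_mem_eq_sup' h𝒯 (fun T => Real.sqrt (Q T g))
    have hQlog : Q T g ≤ 4 * Real.log (Y g) := by
      have h1 : Real.exp (Q T g / 4) ≤ Y g :=
        Finset.single_le_sum (f := fun T => Real.exp (Q T g / 4))
          (fun T _ => (Real.exp_pos _).le) hT
      have h2 : Q T g / 4 ≤ Real.log (Y g) := (Real.le_log_iff_exp_le (hYpos g)).2 h1
      linarith
    have hMg : M g ^ 2 = 4 * Q T g := by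
      have hSg : S g = Real.sqrt (Q T g) := hTS
      have hMg' : M g = 2 * S g := rfl
      rw [hMg', hSg, mul_pow, Real.sq_sqrt (hQ0 T g)]
      norm_num
    linarith
  have hlogint : Integrable (fun g => Real.log (Y g)) (_root_.stdGaussian n) := by
    refine hYint.mono (hYmeas.log.aestronglyMeasurable) (ae_of_all _ fun g => ?_)
    rw [Real.norm_eq_abs, abs_of_nonneg (hlogY0 g), Real.norm_eq_abs,
      abs_of_nonneg (hYpos g).le]
    have := Real.log_le_sub_one_of_pos (hYpos g)
    linarith
  have hM2int : Integrable (fun g => M g ^ 2) (_root_.stdGaussian n) := by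
    refine (hlogint.const_mul 16).mono ((hMmeas.pow_const 2).aestronglyMeasurable)
      (ae_of_all _ fun g => ?_)
    rw [Real.norm_eq_abs, abs_of_nonneg (sq_nonneg _), Real.norm_eq_abs,
      abs_of_nonneg (mul_nonneg (by norm_num) (hlogY0 g))]
    exact hM2log g
  have hMem2 : MemLp M 2 (_root_.stdGaussian n) :=
    (memLp_two_iff_integrable_sq hMmeas.aestronglyMeasurable).2 hM2int
  have hMint : Integrable M (_root_.stdGaussian n) := hMem2.integrable one_le_two
  -- main chain of inequalities
  have step1 : meanWidth K ≤ ∫ g, M g ∂(_root_.stdGaussian n) := by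
    unfold meanWidth
    exact integral_mono_of_nonneg (ae_of_all _ hf0) hMint (ae_of_all _ hfM)
  have hw0 : 0 ≤ meanWidth K := by
    unfold meanWidth
    exact integral_nonneg hf0
  have step2 : (∫ g, M g ∂(_root_.stdGaussian n)) ^ 2 ≤ ∫ g, M g ^ 2 ∂(_root_.stdGaussian n) := by
    have hv := variance_nonneg M (_root_.stdGaussian n)
    rw [variance_eq_sub hMem2] at hv
    have hpow : (_root_.stdGaussian n)[M ^ 2] = ∫ g, M g ^ 2 ∂(_root_.stdGaussian n) := by
      refine integral_congr_ae (ae_of_all _ fun g => ?_)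
      simp [Pi.pow_apply]
    rw [hpow] at hv
    linarith
  have step3 : ∫ g, M g ^ 2 ∂(_root_.stdGaussian n)
      ≤ 16 * ∫ g, Real.log (Y g) ∂(_root_.stdGaussian n) := by
    have h := integral_mono_of_nonneg (ae_of_all _ fun g => sq_nonneg (M g))
      (hlogint.const_mul 16) (ae_of_all _ hM2log)
    rwa [integral_const_mul] at h
  set c : ℝ := ∫ g, Y g ∂(_root_.stdGaussian n) with hcdef
  have hc1 : (1:ℝ) ≤ c := by
    have h1 : ∫ (_ : EuclideanSpace ℝ (Fin n)), (1:ℝ) ∂(_root_.stdGaussian n) = 1 := by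
      simp
    calc (1:ℝ) = _ := h1.symm
      _ ≤ c := integral_mono (integrable_const 1) hYint hY1
  have hc0 : (0:ℝ) < c := lt_of_lt_of_le one_pos hc1
  have step4 : ∫ g, Real.log (Y g) ∂(_root_.stdGaussian n) ≤ Real.log c := by
    have hpt : ∀ g, Real.log (Y g) ≤ Real.log c + (Y g / c - 1) := by
      intro g
      have h1 : Real.log (Y g / c) ≤ Y g / c - 1 :=
        Real.log_le_sub_one_of_pos (div_pos (hYpos g) hc0)
      rw [Real.log_div (ne_of_gt (hYpos g)) (ne_of_gt hc0)] at h1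
      linarith
    have hint2 : Integrable (fun g => Real.log c + (Y g / c - 1)) (_root_.stdGaussian n) :=
      (integrable_const _).add ((hYint.div_const c).sub (integrable_const 1))
    have h := integral_mono hlogint hint2 hpt
    have hI1 : Integrable (fun g : EuclideanSpace ℝ (Fin n) => Y g / c - 1) (_root_.stdGaussian n) :=
      (hYint.div_const c).sub (integrable_const 1)
    have hval : ∫ g, (Real.log c + (Y g / c - 1)) ∂(_root_.stdGaussian n) = Real.log c := by
      rw [integral_add (integrable_const (Real.log c)) hI1,
        integral_sub (hYint.div_const c) (integrable_const 1), integral_div]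
      simp only [integral_const, measure_univ, ENNReal.toReal_one, one_smul, smul_eq_mul,
        one_mul, probReal_univ]
      rw [← hcdef, div_self (ne_of_gt hc0)]
      ring
    rw [hval] at h
    exact h
  have hw2 : meanWidth K ^ 2 ≤ 16 * Real.log c := by
    calc meanWidth K ^ 2 ≤ (∫ g, M g ∂(_root_.stdGaussian n)) ^ 2 := by
          exact pow_le_pow_left₀ hw0 step1 2
      _ ≤ ∫ g, M g ^ 2 ∂(_root_.stdGaussian n) := step2
      _ ≤ 16 * ∫ g, Real.log (Y g) ∂(_root_.stdGaussian n) := step3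
      _ ≤ 16 * Real.log c := by linarith [step4]
  -- bound log c
  have hchoosepos : (0:ℝ) < (n.choose m : ℝ) := by exact_mod_cast Nat.choose_pos hmn
  have hlogc : Real.log c = Real.log (n.choose m : ℝ) + (m : ℝ) * Real.log 2 / 2 := by
    rw [hYval, Real.log_mul (ne_of_gt hchoosepos) (by positivity), Real.log_pow,
      Real.log_sqrt (by norm_num)]
    ring
  have hmR : (0:ℝ) < (m:ℝ) := by exact_mod_cast hm1
  have hnR : (0:ℝ) < (n:ℝ) := by exact_mod_cast hn1
  have hsR : (0:ℝ) < (s:ℝ) := by exact_mod_cast hs1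
  have hfp : (0:ℝ) < (m.factorial : ℝ) := by exact_mod_cast m.factorial_pos
  have hdesc : (n.choose m : ℝ) * (m.factorial : ℝ) ≤ (n:ℝ) ^ m := by
    have h : n.choose m * m.factorial ≤ n ^ m := by
      rw [mul_comm, ← Nat.descFactorial_eq_factorial_mul_choose]
      exact Nat.descFactorial_le_pow n m
    exact_mod_cast h
  have hfact : (m:ℝ) ^ m ≤ Real.exp m * (m.factorial : ℝ) := by
    have h := Real.sum_le_exp_of_nonneg (x := (m:ℝ)) (by positivity) (m+1)
    have h2 : (m:ℝ) ^ m / (m.factorial : ℝ) ≤ Real.exp m := by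
      refine le_trans ?_ h
      refine Finset.single_le_sum (f := fun i => (m:ℝ) ^ i / (i.factorial : ℝ)) ?_
        (Finset.self_mem_range_succ m)
      intro i _
      positivity
    rw [div_le_iff₀ hfp] at h2
    linarith
  have hchoose : (n.choose m : ℝ) ≤ (Real.exp 1 * (n:ℝ) / (m:ℝ)) ^ m := by
    have h1 : (n.choose m : ℝ) ≤ (n:ℝ) ^ m / (m.factorial : ℝ) := by
      rw [le_div_iff₀ hfp]
      exact hdesc
    have h2 : (n:ℝ) ^ m / (m.factorial : ℝ) ≤ (n:ℝ) ^ m * Real.exp m / (m:ℝ) ^ m := by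
      rw [div_le_div_iff₀ hfp (by positivity)]
      have := mul_le_mul_of_nonneg_left hfact (pow_nonneg hnR.le m)
      nlinarith
    have h3 : (n:ℝ) ^ m * Real.exp m / (m:ℝ) ^ m = (Real.exp 1 * (n:ℝ) / (m:ℝ)) ^ m := by
      rw [div_pow, mul_pow, show Real.exp 1 ^ m = Real.exp m by
        rw [← Real.exp_nat_mul, mul_one]]
      ring
    linarith
  have hlogN : Real.log (n.choose m : ℝ) ≤ (m:ℝ) * (1 + Real.log ((n:ℝ) / (m:ℝ))) := by
    calc Real.log (n.choose m : ℝ) ≤ Real.log ((Real.exp 1 * (n:ℝ) / (m:ℝ)) ^ m) :=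
          Real.log_le_log hchoosepos hchoose
      _ = (m:ℝ) * Real.log (Real.exp 1 * (n:ℝ) / (m:ℝ)) := by rw [Real.log_pow]
      _ = (m:ℝ) * (1 + Real.log ((n:ℝ) / (m:ℝ))) := by
          rw [mul_div_assoc, Real.log_mul (Real.exp_ne_zero 1)
            (ne_of_gt (div_pos hnR hmR)), Real.log_exp]
  -- final numeric estimates
  set L : ℝ := Real.log (2 * (n:ℝ) / (s:ℝ)) with hLdef
  set X : ℝ := Real.log ((n:ℝ) / (m:ℝ)) with hXdef
  set l2 : ℝ := Real.log 2 with hl2def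
  have hl2pos : (0:ℝ) < l2 := Real.log_pos (by norm_num)
  have hl223 : (2:ℝ)/3 < l2 := by
    have := Real.log_two_gt_d9
    rw [hl2def]
    norm_num at this ⊢
    linarith
  have hsmR : (s:ℝ) ≤ (m:ℝ) := by exact_mod_cast hsm
  have hm2sR : (m:ℝ) ≤ 2 * (s:ℝ) := by exact_mod_cast hm2s
  have hsnR : (s:ℝ) ≤ (n:ℝ) := by exact_mod_cast hsn
  have hmnR : (m:ℝ) ≤ (n:ℝ) := by exact_mod_cast hmn
  have hL2 : l2 ≤ L := by
    rw [hl2def, hLdef]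
    refine Real.log_le_log (by norm_num) ?_
    rw [le_div_iff₀ hsR]
    linarith
  have hX0 : 0 ≤ X := Real.log_nonneg ((one_le_div hmR).2 hmnR)
  have hXL : X ≤ L := by
    rw [hXdef, hLdef]
    refine Real.log_le_log (div_pos hnR hmR) ?_
    rw [div_le_div_iff₀ hmR hsR]
    nlinarith [hsmR, hnR, hsR]
  have hL0 : (0:ℝ) < L := lt_of_lt_of_le hl2pos hL2
  have hmain : Real.log c ≤ (m:ℝ) * (1 + X) + (m:ℝ) * l2 / 2 := by
    rw [hlogc]
    linarith [hlogN]
  have hfin : 16 * ((m:ℝ) * (1 + X) + (m:ℝ) * l2 / 2) ≤ 96 * (s:ℝ) * L := by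
    have f1 : (m:ℝ) * (1 + X) ≤ (2 * (s:ℝ)) * (1 + X) :=
      mul_le_mul_of_nonneg_right hm2sR (by linarith)
    have f2 : (s:ℝ) * X ≤ (s:ℝ) * L := mul_le_mul_of_nonneg_left hXL hsR.le
    have f3 : (m:ℝ) * l2 ≤ (2 * (s:ℝ)) * l2 := mul_le_mul_of_nonneg_right hm2sR hl2pos.le
    have f4 : (s:ℝ) * l2 ≤ (s:ℝ) * L := mul_le_mul_of_nonneg_left hL2 hsR.le
    have f5 : 2 * (s:ℝ) ≤ 3 * ((s:ℝ) * L) := by nlinarith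
    nlinarith
  calc meanWidth K ^ 2 ≤ 16 * Real.log c := hw2
    _ ≤ 16 * ((m:ℝ) * (1 + X) + (m:ℝ) * l2 / 2) := by linarith
    _ ≤ 96 * (s:ℝ) * L := hfin
end

section
/- Mean width of the compressible signal set: there is an absolute constant C > 0 such that for all integers 1 ≤ s ≤ n, the set K_{n,s} = {x ∈ R^n : ||x||_2 ≤ 1, ||x||_1 ≤ √s} = B_2^n ∩ √s B_1^n satisfies w(K_{n,s}) ≤ C √(s log(2n/s)). -/
open MeasureTheory ProbabilityTheory Real
open scoped RealInnerProductSpace NNReal ENNReal Pointwise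

lemma MW.pi_map_eval {ι : Type*} [Fintype ι] [DecidableEq ι] {α : ι → Type*}
    [∀ i, MeasurableSpace (α i)]
    (μ : ∀ i, Measure (α i)) [∀ i, IsProbabilityMeasure (μ i)] (i : ι) :
    (Measure.pi μ).map (Function.eval i) = μ i := by
  ext s hs
  rw [Measure.map_apply (measurable_pi_apply i) hs, ← Set.univ_pi_update_univ, Measure.pi_pi]
  rw [Finset.prod_eq_single i]
  · simp
  · intro j _ hj; simp [Function.update_of_ne hj]
  · simp

lemma MW.sqrt_le_am (a u : ℝ) (ha : 0 ≤ a) (hu : 0 < u) :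
    Real.sqrt a ≤ a / (2 * u) + u / 2 := by
  have h := sq_nonneg (Real.sqrt a - u)
  have h2 : Real.sqrt a ^ 2 = a := Real.sq_sqrt ha
  rw [div_add_div _ _ (by positivity) (by norm_num), le_div_iff₀ (by positivity)]
  nlinarith

lemma MW.ptwise {n : ℕ} (t u s' : ℝ) (ht : 0 < t) (hu : 0 < u)
    (g x : EuclideanSpace ℝ (Fin n)) (hx2 : ‖x‖ ≤ 1) (hx1 : ∑ j, |x j| ≤ s') :
    ⟪g, x⟫ ≤ (∑ j, if t < |g j| then (g j)^2 else 0) / (2 * u) + u / 2 + t * s' := by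
  classical
  have hinner : ⟪g, x⟫ = ∑ j, g j * x j := by
    simp [PiLp.inner_apply, RCLike.inner_apply, conj_trivial, mul_comm]
  have hsq : ∑ j, (x j)^2 ≤ 1 := by
    have hn := EuclideanSpace.norm_eq x
    have h1 : Real.sqrt (∑ j, ‖x j‖^2) ≤ 1 := hn ▸ hx2
    have h2 : (∑ j, ‖x j‖^2) ≤ 1 := by
      nlinarith [Real.sq_sqrt (by positivity : (0:ℝ) ≤ ∑ j, ‖x j‖^2),
        Real.sqrt_nonneg (∑ j, ‖x j‖^2)]
    simpa [Real.norm_eq_abs, sq_abs] using h2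
  rw [hinner]
  set S : Finset (Fin n) := Finset.univ.filter (fun j => t < |g j|) with hS
  have hsplit : ∑ j, g j * x j ≤ ∑ j ∈ S, |g j| * |x j| + ∑ j ∈ Sᶜ, |g j| * |x j| := by
    rw [Finset.sum_add_sum_compl S]
    apply Finset.sum_le_sum
    intro j _
    rw [← abs_mul]
    exact le_abs_self _
  have hCS : ∑ j ∈ S, |g j| * |x j| ≤ (∑ j, if t < |g j| then (g j)^2 else 0) / (2*u) + u/2 := by
    have hA : ∑ j ∈ S, (g j)^2 = ∑ j, if t < |g j| then (g j)^2 else 0 := by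
      rw [hS, Finset.sum_filter]
    have hxle : ∑ j ∈ S, (x j)^2 ≤ 1 := by
      refine le_trans (Finset.sum_le_sum_of_subset_of_nonneg (Finset.subset_univ _)
        (fun j _ _ => by positivity)) ?_
      simpa using hsq
    calc ∑ j ∈ S, |g j| * |x j|
        ≤ Real.sqrt (∑ j ∈ S, |g j|^2) * Real.sqrt (∑ j ∈ S, |x j|^2) :=
          Real.sum_mul_le_sqrt_mul_sqrt S _ _
      _ ≤ Real.sqrt (∑ j ∈ S, (g j)^2) * 1 := by
          simp only [sq_abs]
          exact mul_le_mul_of_nonneg_left (Real.sqrt_le_one.mpr hxle) (Real.sqrt_nonneg _)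
      _ = Real.sqrt (∑ j, if t < |g j| then (g j)^2 else 0) := by rw [mul_one, hA]
      _ ≤ _ := MW.sqrt_le_am _ u (by positivity) hu
  have htail : ∑ j ∈ Sᶜ, |g j| * |x j| ≤ t * s' := by
    calc ∑ j ∈ Sᶜ, |g j| * |x j| ≤ ∑ j ∈ Sᶜ, t * |x j| := by
          apply Finset.sum_le_sum
          intro j hj
          have : ¬ t < |g j| := by simpa [hS] using hj
          exact mul_le_mul_of_nonneg_right (le_of_not_gt this) (abs_nonneg _)
      _ ≤ ∑ j, t * |x j| := Finset.sum_le_sum_of_subset_of_nonneg (Finset.subset_univ _)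
          (fun j _ _ => by positivity)
      _ = t * ∑ j, |x j| := by rw [Finset.mul_sum]
      _ ≤ t * s' := mul_le_mul_of_nonneg_left hx1 ht.le
  linarith

noncomputable def MW.ff (t : ℝ) : ℝ → ℝ := fun x => if t < |x| then x^2 else 0

namespace MW

lemma ff_meas (t : ℝ) : Measurable (ff t) := by
  unfold ff
  exact Measurable.ite (measurableSet_lt measurable_const measurable_abs)
    (measurable_id.pow_const 2) measurable_const

lemma ff_nonneg (t : ℝ) : ∀ x, 0 ≤ ff t x := by
  intro x; unfold ff; split <;> positivity

lemma ff_le (t : ℝ) (ht : 0 ≤ t) :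
    ∀ x, ff t x ≤ 12 * Real.exp (-(t^2)/4) * Real.exp (x^2/3) := by
  intro x
  unfold ff
  split
  · rename_i h
    have ht2 : t^2 ≤ x^2 := by
      nlinarith [sq_abs x, h.le, ht, abs_nonneg x]
    have h1 : x^2 ≤ 12 * Real.exp (x^2/12) := by
      have := Real.add_one_le_exp (x^2/12)
      nlinarith [Real.exp_nonneg (x^2/12)]
    have h2 : Real.exp (x^2/12) ≤ Real.exp (-(t^2)/4) * Real.exp (x^2/3) := by
      rw [← Real.exp_add]
      apply Real.exp_le_exp.mpr
      linarith
    nlinarith [Real.exp_nonneg (x^2/12)]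
  · positivity

lemma gauss_pdf_eq : ∀ x, gaussianPDFReal 0 1 x = (Real.sqrt (2*π))⁻¹ * Real.exp (-(x^2)/2) := by
  intro x
  simp [gaussianPDFReal]

lemma gauss_integral_eq (g : ℝ → ℝ) :
    ∫ x, g x ∂(gaussianReal 0 1) = ∫ x, gaussianPDFReal 0 1 x * g x := by
  rw [gaussianReal_of_var_ne_zero 0 one_ne_zero]
  have h : (gaussianPDF 0 1) = fun x => ((Real.toNNReal (gaussianPDFReal 0 1 x) : ℝ≥0) : ℝ≥0∞) :=
    rfl
  rw [h, integral_withDensity_eq_integral_smul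
    ((measurable_gaussianPDFReal 0 1).real_toNNReal) g]
  congr 1
  ext x
  rw [NNReal.smul_def, Real.coe_toNNReal _ (gaussianPDFReal_nonneg 0 1 x)]
  rfl

lemma gauss_integrable_iff (g : ℝ → ℝ) :
    Integrable g (gaussianReal 0 1) ↔
      Integrable (fun x => gaussianPDFReal 0 1 x * g x) volume := by
  rw [gaussianReal_of_var_ne_zero 0 one_ne_zero]
  have h : (gaussianPDF 0 1) = fun x => ((Real.toNNReal (gaussianPDFReal 0 1 x) : ℝ≥0) : ℝ≥0∞) :=
    rfl
  rw [h, integrable_withDensity_iff_integrable_smul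
    ((measurable_gaussianPDFReal 0 1).real_toNNReal)]
  constructor <;> intro hh <;>
  · convert hh using 2 with x
    all_goals first | rfl | rw [NNReal.smul_def, Real.coe_toNNReal _ (gaussianPDFReal_nonneg 0 1 x), smul_eq_mul]

lemma bound_integrable (t : ℝ) :
    Integrable (fun x => (12 * Real.exp (-(t^2)/4) * (Real.sqrt (2*π))⁻¹) *
      Real.exp (-(1/6) * x^2)) volume :=
  (integrable_exp_neg_mul_sq (by norm_num : (0:ℝ) < 1/6)).const_mul _

lemma pdf_mul_ff_le (t : ℝ) (ht : 0 ≤ t) : ∀ x, gaussianPDFReal 0 1 x * ff t x ≤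
    (12 * Real.exp (-(t^2)/4) * (Real.sqrt (2*π))⁻¹) * Real.exp (-(1/6) * x^2) := by
  intro x
  rw [gauss_pdf_eq]
  have h1 : (Real.sqrt (2*π))⁻¹ * Real.exp (-(x^2)/2) * ff t x ≤
      (Real.sqrt (2*π))⁻¹ * Real.exp (-(x^2)/2) * (12 * Real.exp (-(t^2)/4) *
        Real.exp (x^2/3)) := by
    apply mul_le_mul_of_nonneg_left (by simpa [mul_assoc] using ff_le t ht x) (by positivity)
  refine h1.trans (le_of_eq ?_)
  have h2 : Real.exp (-(x^2)/2) * Real.exp (x^2/3) = Real.exp (-(1/6) * x^2) := by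
    rw [← Real.exp_add]; congr 1; ring
  calc (Real.sqrt (2*π))⁻¹ * Real.exp (-(x^2)/2) * (12 * Real.exp (-(t^2)/4) *
        Real.exp (x^2/3))
      = 12 * Real.exp (-(t^2)/4) * (Real.sqrt (2*π))⁻¹ *
          (Real.exp (-(x^2)/2) * Real.exp (x^2/3)) := by ring
    _ = 12 * Real.exp (-(t^2)/4) * (Real.sqrt (2*π))⁻¹ * Real.exp (-(1/6) * x^2) := by
        rw [h2]

lemma ff_gauss_integrable (t : ℝ) (ht : 0 ≤ t) : Integrable (ff t) (gaussianReal 0 1) := by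
  rw [gauss_integrable_iff]
  refine (bound_integrable t).mono' ?_ ?_
  · exact ((measurable_gaussianPDFReal 0 1).mul (ff_meas t)).aestronglyMeasurable
  · refine Filter.Eventually.of_forall fun x => ?_
    rw [Real.norm_eq_abs, abs_of_nonneg (mul_nonneg (gaussianPDFReal_nonneg 0 1 x)
      (ff_nonneg t x))]
    exact pdf_mul_ff_le t ht x

lemma ff_gauss_integral_le (t : ℝ) (ht : 0 ≤ t) :
    ∫ x, ff t x ∂(gaussianReal 0 1) ≤ 24 * Real.exp (-(t^2)/4) := by
  rw [gauss_integral_eq]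
  have h1 : ∫ x, gaussianPDFReal 0 1 x * ff t x ≤
      ∫ x, (12 * Real.exp (-(t^2)/4) * (Real.sqrt (2*π))⁻¹) * Real.exp (-(1/6) * x^2) := by
    refine integral_mono ?_ (bound_integrable t) (fun x => pdf_mul_ff_le t ht x)
    · rw [← gauss_integrable_iff]; exact ff_gauss_integrable t ht
  refine h1.trans ?_
  rw [integral_const_mul, integral_gaussian]
  have h6 : Real.sqrt (π / (1/6)) = Real.sqrt 3 * Real.sqrt (2*π) := by
    rw [← Real.sqrt_mul (by norm_num : (0:ℝ) ≤ 3), show (3:ℝ) * (2*π) = π / (1/6) by ring]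
  rw [h6]
  have hs : Real.sqrt (2*π) ≠ 0 := by positivity
  have key : 12 * Real.exp (-(t^2)/4) * (Real.sqrt (2*π))⁻¹ * (Real.sqrt 3 * Real.sqrt (2*π))
      = 12 * Real.sqrt 3 * Real.exp (-(t^2)/4) := by
    field_simp
  rw [key]
  have h3 : Real.sqrt 3 ≤ 2 := by
    rw [show (2:ℝ) = Real.sqrt 4 by rw [show (4:ℝ) = 2^2 by norm_num, Real.sqrt_sq]; norm_num]
    exact Real.sqrt_le_sqrt (by norm_num)
  nlinarith [Real.exp_nonneg (-(t^2)/4), Real.sqrt_nonneg 3]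

lemma stdGaussian_eq (n : ℕ) :
    stdGaussian n = (Measure.pi fun _ : Fin n => gaussianReal 0 1).map
      ⇑(MeasurableEquiv.toLp 2 (Fin n → ℝ)) := rfl

instance stdGaussian_prob (n : ℕ) : IsProbabilityMeasure (stdGaussian n) := by
  rw [stdGaussian_eq]
  exact Measure.isProbabilityMeasure_map
    (MeasurableEquiv.toLp 2 (Fin n → ℝ)).measurable.aemeasurable

lemma coord_integrable (n : ℕ) (t : ℝ) (ht : 0 ≤ t) (j : Fin n) :
    Integrable (fun x : Fin n → ℝ => ff t (x j))
      (Measure.pi fun _ : Fin n => gaussianReal 0 1) := by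
  have hmap := MW.pi_map_eval (fun _ : Fin n => gaussianReal 0 1) j
  have h1 : Integrable (ff t)
      ((Measure.pi fun _ : Fin n => gaussianReal 0 1).map (Function.eval j)) := by
    rw [hmap]; exact ff_gauss_integrable t ht
  rwa [integrable_map_measure (ff_meas t).aestronglyMeasurable
    (measurable_pi_apply j).aemeasurable] at h1

lemma coord_integral (n : ℕ) (t : ℝ) (j : Fin n) :
    ∫ x : Fin n → ℝ, ff t (x j) ∂(Measure.pi fun _ : Fin n => gaussianReal 0 1)
      = ∫ x, ff t x ∂(gaussianReal 0 1) := by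
  have hmap := MW.pi_map_eval (fun _ : Fin n => gaussianReal 0 1) j
  conv_rhs => rw [← hmap]
  rw [integral_map (measurable_pi_apply j).aemeasurable (ff_meas t).aestronglyMeasurable]

lemma X_integrable (n : ℕ) (t : ℝ) (ht : 0 ≤ t) :
    Integrable (fun g : EuclideanSpace ℝ (Fin n) => ∑ j, ff t (g j)) (stdGaussian n) := by
  rw [stdGaussian_eq, integrable_map_equiv]
  exact integrable_finset_sum _ (fun j _ => coord_integrable n t ht j)

lemma X_integral (n : ℕ) (t : ℝ) (ht : 0 ≤ t) :
    ∫ g, ∑ j, ff t (g j) ∂(stdGaussian n) = n * ∫ x, ff t x ∂(gaussianReal 0 1) := by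
  have h : (∫ x : Fin n → ℝ, ∑ j, ff t (x j) ∂(Measure.pi fun _ : Fin n => gaussianReal 0 1))
      = n * ∫ x, ff t x ∂(gaussianReal 0 1) := by
    rw [integral_finset_sum _ (fun j _ => coord_integrable n t ht j)]
    simp_rw [coord_integral n t]
    rw [Finset.sum_const, Finset.card_univ, Fintype.card_fin, nsmul_eq_mul]
  rw [stdGaussian_eq, integral_map_equiv]
  exact h

end MW

theorem meanWidth_compressible_set :
    ∃ C : ℝ, 0 < C ∧ ∀ n s : ℕ, 1 ≤ s → s ≤ n →
      meanWidth {x : EuclideanSpace ℝ (Fin n) |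
          ‖x‖ ≤ 1 ∧ ∑ j, |x j| ≤ Real.sqrt s} ≤
        C * Real.sqrt (s * Real.log (2 * n / s)) := by
  classical
  refine ⟨64, by norm_num, ?_⟩
  intro n s hs hn
  have hs1 : (1:ℝ) ≤ (s:ℝ) := by exact_mod_cast hs
  have hsn : (s:ℝ) ≤ (n:ℝ) := by exact_mod_cast hn
  have hspos : (0:ℝ) < s := by linarith
  have hnpos : (0:ℝ) < n := by linarith
  set L := Real.log (2 * (n:ℝ) / (s:ℝ)) with hLdef
  have h2 : (2:ℝ) ≤ 2*(n:ℝ)/s := by rw [le_div_iff₀ hspos]; nlinarith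
  have hlog2 : (1/4 : ℝ) ≤ Real.log 2 := by
    have := Real.log_two_gt_d9; linarith
  have hL2 : (1/4:ℝ) ≤ L := le_trans hlog2 (Real.log_le_log (by norm_num) h2)
  have hL0 : (0:ℝ) < L := lt_of_lt_of_le (by norm_num) hL2
  set t := 2 * Real.sqrt L with htdef
  have ht0 : (0:ℝ) < t := by positivity
  have hsqL : (1/2:ℝ) ≤ Real.sqrt L := by
    have h := Real.sqrt_le_sqrt hL2
    rwa [show (1/4:ℝ) = (1/2)^2 by norm_num, Real.sqrt_sq (by norm_num : (0:ℝ) ≤ 1/2)] at h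
  have ht1 : (1:ℝ) ≤ t := by rw [htdef]; linarith
  have hexp : Real.exp (-(t^2)/4) = s / (2*n) := by
    rw [htdef, mul_pow, Real.sq_sqrt hL0.le,
      show -(2^2*L)/4 = -L by ring, Real.exp_neg, hLdef, Real.exp_log (by positivity), inv_div]
  set u := t * Real.sqrt s with hudef
  have hu0 : (0:ℝ) < u := by positivity
  set K : Set (EuclideanSpace ℝ (Fin n)) :=
    {x | ‖x‖ ≤ 1 ∧ ∑ j, |x j| ≤ Real.sqrt s} with hK
  set F : EuclideanSpace ℝ (Fin n) → ℝ :=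
    fun g => (∑ j, MW.ff t (g j)) / u + (u + 2 * t * Real.sqrt s) with hF
  have hle : ∀ g : EuclideanSpace ℝ (Fin n), sSup ((fun z => ⟪g, z⟫) '' (K - K)) ≤ F g := by
    intro g
    have hXnn : (0:ℝ) ≤ ∑ j, MW.ff t (g j) := Finset.sum_nonneg fun j _ => MW.ff_nonneg t _
    have hFnn : 0 ≤ F g := by
      rw [hF]
      have : (0:ℝ) ≤ u + 2 * t * Real.sqrt s := by positivity
      exact add_nonneg (div_nonneg hXnn hu0.le) this
    apply Real.sSup_le _ hFnn
    rintro r ⟨z, hz, rfl⟩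
    rw [Set.mem_sub] at hz
    obtain ⟨x, hx, y, hy, rfl⟩ := hz
    have hxm : ‖x‖ ≤ 1 ∧ ∑ j, |x j| ≤ Real.sqrt s := hx
    have hym : ‖y‖ ≤ 1 ∧ ∑ j, |y j| ≤ Real.sqrt s := hy
    have hy2 : ∑ j, |(-y : EuclideanSpace ℝ (Fin n)) j| ≤ Real.sqrt s := by
      simpa using hym.2
    have b1 := MW.ptwise t u (Real.sqrt s) ht0 hu0 g x hxm.1 hxm.2
    have b2 := MW.ptwise t u (Real.sqrt s) ht0 hu0 g (-y) (by rw [norm_neg]; exact hym.1) hy2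
    have hinner : ⟪g, x - y⟫ = ⟪g, x⟫ + ⟪g, (-y : EuclideanSpace ℝ (Fin n))⟫ := by
      rw [inner_sub_right, inner_neg_right]; ring
    have hsum_eq : (∑ j, (if t < |g j| then (g j)^2 else 0)) = ∑ j, MW.ff t (g j) := rfl
    rw [hsum_eq] at b1 b2
    have hid : (∑ j, MW.ff t (g j)) / (2*u) + u/2 + t * Real.sqrt s
        + ((∑ j, MW.ff t (g j)) / (2*u) + u/2 + t * Real.sqrt s) = F g := by
      rw [hF]
      field_simp
      ring
    show ⟪g, x - y⟫ ≤ F g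
    rw [hinner, ← hid]
    exact add_le_add b1 b2
  have hIbd : ∫ x, MW.ff t x ∂(gaussianReal 0 1) ≤ 12 * s / n := by
    have h := MW.ff_gauss_integral_le t ht0.le
    rw [hexp] at h
    calc ∫ x, MW.ff t x ∂(gaussianReal 0 1) ≤ 24 * ((s:ℝ) / (2*n)) := h
      _ = 12 * s / n := by field_simp; ring
  have hInn : (0:ℝ) ≤ ∫ x, MW.ff t x ∂(gaussianReal 0 1) :=
    integral_nonneg (MW.ff_nonneg t)
  have hFint : Integrable F (stdGaussian n) := by
    rw [hF]
    exact ((MW.X_integrable n t ht0.le).div_const u).add (integrable_const _)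
  have hsqs1 : (1:ℝ) ≤ Real.sqrt s := by
    have h := Real.sqrt_le_sqrt hs1
    rwa [Real.sqrt_one] at h
  have hss : Real.sqrt (s:ℝ) * Real.sqrt (s:ℝ) = (s:ℝ) := Real.mul_self_sqrt hspos.le
  have hFval : ∫ g, F g ∂(stdGaussian n) ≤ 15 * (t * Real.sqrt s) := by
    rw [hF, integral_add ((MW.X_integrable n t ht0.le).div_const u) (integrable_const _),
      integral_div, MW.X_integral n t ht0.le, integral_const, probReal_univ]
    simp only [one_smul]
    have h1 : (n:ℝ) * ∫ x, MW.ff t x ∂(gaussianReal 0 1) ≤ 12 * s := by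
      calc (n:ℝ) * ∫ x, MW.ff t x ∂(gaussianReal 0 1) ≤ (n:ℝ) * (12 * s / n) :=
            mul_le_mul_of_nonneg_left hIbd hnpos.le
        _ = 12 * s := by field_simp
    have h2 : 12 * (s:ℝ) / u ≤ 12 * (t * Real.sqrt s) := by
      rw [div_le_iff₀ hu0, hudef]
      have htt : (1:ℝ) ≤ t * t := by nlinarith
      nlinarith [htt, hss, hspos]
    have h3 : ((n:ℝ) * ∫ x, MW.ff t x ∂(gaussianReal 0 1)) / u ≤ 12 * (s:ℝ) / u :=
      (div_le_div_iff_of_pos_right hu0).mpr h1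
    have h4 : u + 2 * t * Real.sqrt s = 3 * (t * Real.sqrt s) := by rw [hudef]; ring
    linarith
  by_cases hI : Integrable (fun g : EuclideanSpace ℝ (Fin n) =>
      sSup ((fun z => ⟪g, z⟫) '' (K - K))) (stdGaussian n)
  · have hmono := integral_mono hI hFint hle
    have hts : t * Real.sqrt s = 2 * Real.sqrt ((s:ℝ) * L) := by
      rw [htdef, Real.sqrt_mul hspos.le]
      ring
    unfold meanWidth
    refine le_trans hmono (le_trans hFval ?_)
    rw [hts]
    nlinarith [Real.sqrt_nonneg ((s:ℝ) * L)]
  · unfold meanWidth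
    rw [integral_undef hI]
    positivity
end

section
/- Logistic correlation coefficient lower bound: let g be a standard normal random variable and α > 0. For θ(z) = tanh(αz/2) (the correlation function arising from the logistic model with signal of Euclidean norm α), one has λ = E[θ(g) g] = (α/2) E[sech²(αg/2)] ≥ (1/6) min(α, 1). -/
open MeasureTheory ProbabilityTheory Real
open scoped ENNReal NNReal

namespace LogCorrAux

noncomputable def q (x : ℝ) : ℝ := (Real.sqrt (2 * Real.pi))⁻¹ * Real.exp (-x ^ 2 / 2)

lemma q_eq (x : ℝ) : gaussianPDFReal 0 1 x = q x := by
  simp [gaussianPDFReal, q]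

lemma q_nonneg (x : ℝ) : 0 ≤ q x := by
  unfold q; positivity

lemma continuous_q : Continuous q := by
  unfold q; fun_prop

lemma hasDerivAt_q (x : ℝ) : HasDerivAt q (-x * q x) x := by
  have h1 : HasDerivAt (fun y : ℝ => -y ^ 2 / 2) (-x) x := by
    have := ((hasDerivAt_pow 2 x).neg).div_const 2
    refine this.congr_deriv ?_; ring
  have h2 := h1.exp
  have h3 := h2.const_mul ((Real.sqrt (2 * Real.pi))⁻¹)
  refine h3.congr_deriv ?_
  unfold q; ring

lemma integral_q : ∫ x, q x = 1 := by
  rw [show q = gaussianPDFReal 0 1 from funext fun x => (q_eq x).symm]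
  exact integral_gaussianPDFReal_eq_one 0 one_ne_zero

lemma hasDerivAt_tanh (x : ℝ) : HasDerivAt Real.tanh (1 / Real.cosh x ^ 2) x := by
  have h := (Real.hasDerivAt_sinh x).div (Real.hasDerivAt_cosh x) (Real.cosh_pos x).ne'
  have he : Real.tanh = fun y => Real.sinh y / Real.cosh y :=
    funext fun y => Real.tanh_eq_sinh_div_cosh y
  rw [he]
  have key : Real.cosh x * Real.cosh x - Real.sinh x * Real.sinh x = 1 := by
    nlinarith [Real.cosh_sq_sub_sinh_sq x]
  refine h.congr_deriv ?_
  rw [key]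

lemma continuous_tanh : Continuous Real.tanh :=
  continuous_iff_continuousAt.mpr fun x => (hasDerivAt_tanh x).differentiableAt.continuousAt

lemma tanh_mono : Monotone Real.tanh :=
  monotone_of_deriv_nonneg (fun x => (hasDerivAt_tanh x).differentiableAt)
    (fun x => by rw [(hasDerivAt_tanh x).deriv]; positivity)

lemma tanh_nonneg {x : ℝ} (hx : 0 ≤ x) : 0 ≤ Real.tanh x := by
  simpa [Real.tanh_zero] using tanh_mono hx

lemma tanh_sq (x : ℝ) : Real.tanh x ^ 2 = 1 - 1 / Real.cosh x ^ 2 := by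
  rw [Real.tanh_eq_sinh_div_cosh]
  have hc := (Real.cosh_pos x).ne'
  field_simp
  nlinarith [Real.cosh_sq_sub_sinh_sq x]

lemma tanh_le_self {x : ℝ} (hx : 0 ≤ x) : Real.tanh x ≤ x := by
  have hd : ∀ y : ℝ, HasDerivAt (fun y : ℝ => y - Real.tanh y) (1 - 1 / Real.cosh y ^ 2) y := by
    intro y
    exact (hasDerivAt_id y).sub (hasDerivAt_tanh y)
  have hg : Monotone (fun y : ℝ => y - Real.tanh y) := by
    apply monotone_of_deriv_nonneg
    · exact fun y => (hd y).differentiableAt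
    · intro y
      rw [(hd y).deriv]
      have h1 : (1 : ℝ) ≤ Real.cosh y ^ 2 := by nlinarith [Real.one_le_cosh y]
      have : 1 / Real.cosh y ^ 2 ≤ 1 := by
        rw [div_le_one (by positivity)]; exact h1
      linarith
  have := hg hx
  simpa [Real.tanh_zero] using this

lemma tanh_sq_le (x : ℝ) : Real.tanh x ^ 2 ≤ x ^ 2 := by
  rcases le_total 0 x with h | h
  · nlinarith [tanh_nonneg h, tanh_le_self h]
  · have h1 : (0:ℝ) ≤ -x := by linarith
    have h2 := tanh_nonneg h1
    have h3 := tanh_le_self h1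
    rw [show x = -(-x) by ring, Real.tanh_neg]
    ring_nf
    nlinarith
  
lemma tanh_cubic {x : ℝ} (hx : 0 ≤ x) : x - x ^ 3 / 3 ≤ Real.tanh x := by
  have hd : ∀ y : ℝ, HasDerivAt (fun z : ℝ => Real.tanh z - z + z ^ 3 / 3)
      (1 / Real.cosh y ^ 2 - 1 + y ^ 2) y := by
    intro y
    have := ((hasDerivAt_tanh y).sub (hasDerivAt_id y)).add ((hasDerivAt_pow 3 y).div_const 3)
    refine this.congr_deriv ?_; ring
  have hg : Monotone (fun z : ℝ => Real.tanh z - z + z ^ 3 / 3) := by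
    apply monotone_of_deriv_nonneg
    · exact fun y => (hd y).differentiableAt
    · intro y
      rw [(hd y).deriv]
      have h1 := tanh_sq y
      have h2 := tanh_sq_le y
      linarith
  have := hg hx
  simp only [Real.tanh_zero] at this
  norm_num at this
  linarith

/-- Conversion from the Gaussian measure integral to a Lebesgue integral. -/
lemma integral_gauss (f : ℝ → ℝ) :
    ∫ x, f x ∂(gaussianReal 0 1) = ∫ x, q x * f x := by
  rw [gaussianReal_of_var_ne_zero 0 one_ne_zero]
  have hpdf : gaussianPDF 0 1 = fun x => ((Real.toNNReal (gaussianPDFReal 0 1 x) : ℝ≥0) : ℝ≥0∞) := by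
    funext x; rfl
  rw [hpdf, integral_withDensity_eq_integral_smul ((measurable_gaussianPDFReal 0 1).real_toNNReal) f]
  congr 1
  funext x
  rw [NNReal.smul_def, smul_eq_mul, Real.coe_toNNReal _ (gaussianPDFReal_nonneg 0 1 x), q_eq]

lemma key_bound (x : ℝ) : x ^ 4 * Real.exp (-x ^ 2 / 2) ≤ 64 * Real.exp (-x ^ 2 / 4) := by
  have h8 : x ^ 2 / 8 ≤ Real.exp (x ^ 2 / 8) := by
    nlinarith [Real.add_one_le_exp (x ^ 2 / 8)]
  have hmul : Real.exp (x ^ 2 / 8) * Real.exp (x ^ 2 / 8) = Real.exp (x ^ 2 / 4) := by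
    rw [← Real.exp_add]; ring_nf
  have h4 : x ^ 4 ≤ 64 * Real.exp (x ^ 2 / 4) := by
    nlinarith [Real.exp_pos (x ^ 2 / 8), sq_nonneg (x^2)]
  have hsplit : Real.exp (-x ^ 2 / 2) = Real.exp (-x ^ 2 / 4) * Real.exp (-x ^ 2 / 4) := by
    rw [← Real.exp_add]; ring_nf
  have hle : x ^ 4 * Real.exp (-x ^ 2 / 4) ≤ 64 := by
    have h := mul_le_mul_of_nonneg_right h4 (Real.exp_pos (-x ^ 2 / 4)).le
    calc x ^ 4 * Real.exp (-x ^ 2 / 4) ≤ 64 * Real.exp (x ^ 2 / 4) * Real.exp (-x ^ 2 / 4) := h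
      _ = 64 := by rw [mul_assoc, ← Real.exp_add]; ring_nf; rw [Real.exp_zero]; ring
  calc x ^ 4 * Real.exp (-x ^ 2 / 2)
      = (x ^ 4 * Real.exp (-x ^ 2 / 4)) * Real.exp (-x ^ 2 / 4) := by rw [hsplit]; ring
    _ ≤ 64 * Real.exp (-x ^ 2 / 4) :=
        mul_le_mul_of_nonneg_right hle (Real.exp_pos _).le

lemma integrable_exp_quarter : Integrable (fun x : ℝ => Real.exp (-x ^ 2 / 4)) := by
  have h := integrable_exp_neg_mul_sq (show (0:ℝ) < 1/4 by norm_num)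
  have he : (fun x : ℝ => Real.exp (-(1/4) * x ^ 2)) = fun x : ℝ => Real.exp (-x ^ 2 / 4) := by
    funext x; congr 1; ring
  rwa [he] at h

lemma integrable_pow_gauss {n : ℕ} (hn : n ≤ 4) :
    Integrable (fun x : ℝ => x ^ n * Real.exp (-x ^ 2 / 2)) := by
  apply Integrable.mono' ((integrable_exp_quarter.add (integrable_exp_quarter.const_mul 64)))
  · exact ((continuous_pow n).mul (Real.continuous_exp.comp (by fun_prop))).aestronglyMeasurable
  · refine ae_of_all _ fun x => ?_
    have habs : |x| ^ n ≤ 1 + x ^ 4 := by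
      rcases le_total (|x|) 1 with h | h
      · have := pow_le_one₀ (n := n) (abs_nonneg x) h
        nlinarith [sq_nonneg (x ^ 2)]
      · have h1 : |x| ^ n ≤ |x| ^ 4 := pow_le_pow_right₀ h hn
        have h2 : |x| ^ 4 = x ^ 4 := by
          rw [← abs_pow, abs_of_nonneg (by positivity)]
        nlinarith
    have hnorm : ‖x ^ n * Real.exp (-x ^ 2 / 2)‖ = |x| ^ n * Real.exp (-x ^ 2 / 2) := by
      rw [norm_mul, Real.norm_eq_abs, Real.norm_eq_abs, abs_pow, Real.abs_exp]
    rw [hnorm]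
    have hemono : Real.exp (-x ^ 2 / 2) ≤ Real.exp (-x ^ 2 / 4) := by
      apply Real.exp_le_exp.mpr; nlinarith [sq_nonneg x]
    have h1 : |x| ^ n * Real.exp (-x ^ 2 / 2) ≤ (1 + x ^ 4) * Real.exp (-x ^ 2 / 2) :=
      mul_le_mul_of_nonneg_right habs (Real.exp_pos _).le
    have h2 : (1 + x ^ 4) * Real.exp (-x ^ 2 / 2)
        = Real.exp (-x ^ 2 / 2) + x ^ 4 * Real.exp (-x ^ 2 / 2) := by ring
    calc |x| ^ n * Real.exp (-x ^ 2 / 2)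
        ≤ Real.exp (-x ^ 2 / 2) + x ^ 4 * Real.exp (-x ^ 2 / 2) := by rw [← h2]; exact h1
      _ ≤ Real.exp (-x ^ 2 / 4) + 64 * Real.exp (-x ^ 2 / 4) :=
          add_le_add hemono (key_bound x)

lemma integrable_pow_q {n : ℕ} (hn : n ≤ 4) : Integrable (fun x : ℝ => x ^ n * q x) := by
  have h := (integrable_pow_gauss hn).const_mul ((Real.sqrt (2 * Real.pi))⁻¹)
  exact h.congr (ae_of_all _ fun x => by unfold q; ring)

lemma integrable_q : Integrable q := by
  have := integrable_pow_q (n := 0) (by norm_num)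
  simpa using this

lemma integrable_mul_q : Integrable (fun x : ℝ => x * q x) := by
  have := integrable_pow_q (n := 1) (by norm_num)
  simpa using this

lemma integral_sq_q : ∫ x, x ^ 2 * q x = 1 := by
  have hF : ∀ x : ℝ, HasDerivAt (fun y : ℝ => y * q y) (q x - x ^ 2 * q x) x := by
    intro x
    have := (hasDerivAt_id x).mul (hasDerivAt_q x)
    refine this.congr_deriv ?_; simp only [id_eq]; ring
  have h0 : ∫ x, (q x - x ^ 2 * q x) = 0 :=
    integral_eq_zero_of_hasDerivAt_of_integrable hF
      (integrable_q.sub (integrable_pow_q (by norm_num)))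
      integrable_mul_q
  rw [integral_sub integrable_q (integrable_pow_q (by norm_num)), integral_q] at h0
  linarith

lemma integral_pow4_q : ∫ x, x ^ 4 * q x = 3 := by
  have hF : ∀ x : ℝ, HasDerivAt (fun y : ℝ => y ^ 3 * q y)
      (3 * (x ^ 2 * q x) - x ^ 4 * q x) x := by
    intro x
    have := (hasDerivAt_pow 3 x).mul (hasDerivAt_q x)
    refine this.congr_deriv ?_; ring
  have h0 : ∫ x, (3 * (x ^ 2 * q x) - x ^ 4 * q x) = 0 :=
    integral_eq_zero_of_hasDerivAt_of_integrable hF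
      (((integrable_pow_q (by norm_num)).const_mul 3).sub (integrable_pow_q (by norm_num)))
      (integrable_pow_q (n := 3) (by norm_num))
  rw [integral_sub ((integrable_pow_q (by norm_num)).const_mul 3)
      (integrable_pow_q (by norm_num)), integral_const_mul, integral_sq_q] at h0
  linarith

lemma integrable_sech_q (α : ℝ) :
    Integrable (fun x : ℝ => (1 / Real.cosh (α * x / 2)) ^ 2 * q x) := by
  apply Integrable.mono' integrable_q
  · apply Continuous.aestronglyMeasurable
    apply Continuous.mul _ continuous_q
    apply Continuous.pow
    exact continuous_const.div (Real.continuous_cosh.comp (by fun_prop))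
      (fun x => (Real.cosh_pos _).ne')
  · refine ae_of_all _ fun x => ?_
    have hc := Real.one_le_cosh (α * x / 2)
    have h1 : (1 / Real.cosh (α * x / 2)) ^ 2 ≤ 1 := by
      rw [div_pow, one_pow, div_le_one (by positivity)]
      nlinarith
    have h2 : (0:ℝ) ≤ (1 / Real.cosh (α * x / 2)) ^ 2 := by positivity
    rw [Real.norm_eq_abs, abs_of_nonneg (mul_nonneg h2 (q_nonneg x))]
    nlinarith [q_nonneg x]

lemma integrable_tanh_mul_q (α : ℝ) :
    Integrable (fun x : ℝ => q x * (Real.tanh (α * x / 2) * x)) := by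
  apply Integrable.mono' integrable_mul_q.abs
  · apply Continuous.aestronglyMeasurable
    exact continuous_q.mul ((continuous_tanh.comp (by fun_prop)).mul continuous_id)
  · refine ae_of_all _ fun x => ?_
    have h2 := tanh_sq (α * x / 2)
    have hcq : (0:ℝ) < Real.cosh (α * x / 2) ^ 2 := by positivity
    have hsq : Real.tanh (α * x / 2) ^ 2 ≤ 1 := by
      have : 0 ≤ 1 / Real.cosh (α * x / 2) ^ 2 := by positivity
      linarith
    have ht : |Real.tanh (α * x / 2)| ≤ 1 := by
      nlinarith [abs_nonneg (Real.tanh (α * x / 2)), sq_abs (Real.tanh (α * x / 2))]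
    have hxq : |x * q x| = |x| * q x := by
      rw [abs_mul, abs_of_nonneg (q_nonneg x)]
    rw [Real.norm_eq_abs, abs_mul, abs_of_nonneg (q_nonneg x), abs_mul, hxq]
    have habs := abs_nonneg x
    nlinarith [mul_le_mul_of_nonneg_left (mul_le_mul_of_nonneg_right ht habs) (q_nonneg x),
      q_nonneg x]

lemma integrable_tanh_q (α : ℝ) :
    Integrable (fun x : ℝ => Real.tanh (α * x / 2) * q x) := by
  apply Integrable.mono' integrable_q
  · apply Continuous.aestronglyMeasurable
    exact (continuous_tanh.comp (by fun_prop)).mul continuous_q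
  · refine ae_of_all _ fun x => ?_
    have h2 := tanh_sq (α * x / 2)
    have hc := Real.one_le_cosh (α * x / 2)
    have ht : Real.tanh (α * x / 2) ^ 2 ≤ 1 := by
      have : 0 ≤ 1 / Real.cosh (α * x / 2) ^ 2 := by positivity
      linarith
    have ht' : |Real.tanh (α * x / 2)| ≤ 1 := by
      nlinarith [abs_nonneg (Real.tanh (α * x / 2)), sq_abs (Real.tanh (α * x / 2))]
    rw [Real.norm_eq_abs, abs_mul, abs_of_nonneg (q_nonneg x)]
    nlinarith [q_nonneg x, abs_nonneg (Real.tanh (α * x / 2))]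

lemma ibp (α : ℝ) :
    ∫ x, q x * (Real.tanh (α * x / 2) * x)
      = α / 2 * ∫ x, q x * (1 / Real.cosh (α * x / 2)) ^ 2 := by
  have hT : ∀ x : ℝ, HasDerivAt (fun y : ℝ => Real.tanh (α * y / 2))
      (α / 2 * (1 / Real.cosh (α * x / 2)) ^ 2) x := by
    intro x
    have hl : HasDerivAt (fun y : ℝ => α * y / 2) (α / 2) x := by
      have := ((hasDerivAt_id x).const_mul α).div_const 2
      refine this.congr_deriv ?_; ring
    have := (hasDerivAt_tanh (α * x / 2)).comp x hl
    refine this.congr_deriv ?_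
    rw [div_pow, one_pow]; ring
  have hF : ∀ x : ℝ, HasDerivAt (fun y : ℝ => Real.tanh (α * y / 2) * q y)
      (α / 2 * ((1 / Real.cosh (α * x / 2)) ^ 2 * q x) - q x * (Real.tanh (α * x / 2) * x)) x := by
    intro x
    have := (hT x).mul (hasDerivAt_q x)
    refine this.congr_deriv ?_; ring
  have h0 : ∫ x, (α / 2 * ((1 / Real.cosh (α * x / 2)) ^ 2 * q x)
      - q x * (Real.tanh (α * x / 2) * x)) = 0 :=
    integral_eq_zero_of_hasDerivAt_of_integrable hF
      (((integrable_sech_q α).const_mul (α / 2)).sub (integrable_tanh_mul_q α))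
      (integrable_tanh_q α)
  rw [integral_sub ((integrable_sech_q α).const_mul (α / 2)) (integrable_tanh_mul_q α),
    integral_const_mul] at h0
  have hcomm : ∫ x, (1 / Real.cosh (α * x / 2)) ^ 2 * q x
      = ∫ x, q x * (1 / Real.cosh (α * x / 2)) ^ 2 := by
    congr 1; funext x; ring
  linarith [h0, hcomm ▸ h0]

lemma pointwise_bound {α β : ℝ} (hβ : 0 ≤ β) (hβα : β ≤ α) (x : ℝ) :
    β / 2 * x ^ 2 - β ^ 3 / 24 * x ^ 4 ≤ Real.tanh (α * x / 2) * x := by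
  have key : ∀ z : ℝ, 0 ≤ z →
      β / 2 * z ^ 2 - β ^ 3 / 24 * z ^ 4 ≤ Real.tanh (α * z / 2) * z := by
    intro z hz
    have h1 : Real.tanh (β * z / 2) ≤ Real.tanh (α * z / 2) :=
      tanh_mono (by nlinarith)
    have h2 : β * z / 2 - (β * z / 2) ^ 3 / 3 ≤ Real.tanh (β * z / 2) :=
      tanh_cubic (by positivity)
    nlinarith [mul_le_mul_of_nonneg_right h1 hz, mul_le_mul_of_nonneg_right h2 hz]
  rcases le_total 0 x with hx | hx
  · exact key x hx
  · have h := key (-x) (by linarith)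
    rw [show α * (-x) / 2 = -(α * x / 2) by ring, Real.tanh_neg] at h
    nlinarith [h]

end LogCorrAux

open LogCorrAux in
theorem logistic_correlation_lower_bound (α : ℝ) (hα : 0 < α) :
    (∫ s, Real.tanh (α * s / 2) * s ∂(gaussianReal 0 1)) =
      α / 2 * ∫ s, (1 / Real.cosh (α * s / 2)) ^ 2 ∂(gaussianReal 0 1) ∧
    min α 1 / 6 ≤ ∫ s, Real.tanh (α * s / 2) * s ∂(gaussianReal 0 1) := by
  constructor
  · rw [integral_gauss (fun s => Real.tanh (α * s / 2) * s),
      integral_gauss (fun s => (1 / Real.cosh (α * s / 2)) ^ 2)]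
    exact ibp α
  · rw [integral_gauss (fun s => Real.tanh (α * s / 2) * s)]
    set β := min α 1 with hβdef
    have hβpos : 0 < β := lt_min hα one_pos
    have hβ1 : β ≤ 1 := min_le_right _ _
    have hβα : β ≤ α := min_le_left _ _
    have heq : (fun x : ℝ => q x * (β / 2 * x ^ 2 - β ^ 3 / 24 * x ^ 4))
        = fun x : ℝ => β / 2 * (x ^ 2 * q x) - β ^ 3 / 24 * (x ^ 4 * q x) :=
      funext fun x => by ring
    have hIlhs : Integrable (fun x : ℝ => q x * (β / 2 * x ^ 2 - β ^ 3 / 24 * x ^ 4)) := by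
      rw [heq]
      exact ((integrable_pow_q (by norm_num)).const_mul _).sub
        ((integrable_pow_q (by norm_num)).const_mul _)
    have hval : ∫ x, q x * (β / 2 * x ^ 2 - β ^ 3 / 24 * x ^ 4) = β / 2 - β ^ 3 / 8 := by
      rw [heq, integral_sub ((integrable_pow_q (by norm_num)).const_mul _)
        ((integrable_pow_q (by norm_num)).const_mul _), integral_const_mul,
        integral_const_mul, integral_sq_q, integral_pow4_q]
      ring
    have hmono : ∫ x, q x * (β / 2 * x ^ 2 - β ^ 3 / 24 * x ^ 4)
        ≤ ∫ x, q x * (Real.tanh (α * x / 2) * x) := by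
      apply integral_mono hIlhs (integrable_tanh_mul_q α)
      intro x
      exact mul_le_mul_of_nonneg_left (pointwise_bound hβpos.le hβα x) (q_nonneg x)
    rw [hval] at hmono
    have hcube : β ^ 3 ≤ β := by
      nlinarith [mul_nonneg (mul_nonneg hβpos.le (sub_nonneg.mpr hβ1))
        (by linarith : (0:ℝ) ≤ 1 + β)]
    linarith [hmono, hcube]
end
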